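/- Let D = conv{0, e₁, e₂, e₃, e₁+e₃, e₂+e₃} ⊆ ℝ³ be the triangular prism over the triangle conv{0, e₁, e₂}. Then the Lebesgue volume of the difference body D + (−D) equals 6. -/

import Mathlib

open Pointwise MeasureTheory

set_option maxHeartbeats 1000000

/-- The standard basis vector `eᵢ` of `ℝ³`. -/
noncomputable def stdVec (i : Fin 3) : EuclideanSpace ℝ (Fin 3) :=
  EuclideanSpace.single i (1 : ℝ)

/-- The triangular prism `conv {0, e₁, e₂, e₃, e₁+e₃, e₂+e₃} ⊆ ℝ³` over the
triangle `conv {0, e₁, e₂}`. -/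
noncomputable def stdPrism : Set (EuclideanSpace ℝ (Fin 3)) :=
  convexHull ℝ {0, stdVec 0, stdVec 1, stdVec 2, stdVec 0 + stdVec 2, stdVec 1 + stdVec 2}

/-- The halfspace description of the prism. -/
def Pset : Set (EuclideanSpace ℝ (Fin 3)) :=
  {x | 0 ≤ x 0 ∧ 0 ≤ x 1 ∧ x 0 + x 1 ≤ 1 ∧ 0 ≤ x 2 ∧ x 2 ≤ 1}

/-- The halfspace description of the difference body (a hexagonal prism). -/
def Kset : Set (EuclideanSpace ℝ (Fin 3)) :=
  {x | -1 ≤ x 0 ∧ x 0 ≤ 1 ∧ -1 ≤ x 1 ∧ x 1 ≤ 1 ∧ -1 ≤ x 0 + x 1 ∧ x 0 + x 1 ≤ 1 ∧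
    -1 ≤ x 2 ∧ x 2 ≤ 1}

/-- The hexagon `[-1,1]² ∩ {|x+y| ≤ 1}` in the plane. -/
def Hset : Set (ℝ × ℝ) :=
  {p | -1 ≤ p.1 ∧ p.1 ≤ 1 ∧ -1 ≤ p.2 ∧ p.2 ≤ 1 ∧ -1 ≤ p.1 + p.2 ∧ p.1 + p.2 ≤ 1}

/-- The hexagonal prism as a subset of `ℝ × (ℝ × ℝ)`. -/
def Sset : Set (ℝ × (ℝ × ℝ)) := Set.Icc (-1:ℝ) 1 ×ˢ Hset

lemma convex_Pset : Convex ℝ Pset := by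
  intro x hx y hy a b ha hb hab
  obtain ⟨h1, h2, h3, h4, h5⟩ := hx
  obtain ⟨g1, g2, g3, g4, g5⟩ := hy
  have e : ∀ i, (a • x + b • y) i = a * x i + b * y i := by
    intro i; simp [PiLp.add_apply, PiLp.smul_apply, smul_eq_mul]
  refine ⟨?_, ?_, ?_, ?_, ?_⟩ <;> simp only [e] <;> nlinarith

lemma prism_subset_Pset : stdPrism ⊆ Pset := by
  rw [stdPrism]
  apply convexHull_min _ convex_Pset
  intro v hv
  simp only [Set.mem_insert_iff, Set.mem_singleton_iff] at hv
  rcases hv with h|h|h|h|h|h <;> subst h <;>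
    refine ⟨?_, ?_, ?_, ?_, ?_⟩ <;>
    simp [stdVec, EuclideanSpace.single_apply, PiLp.add_apply]

lemma Pset_subset_prism : Pset ⊆ stdPrism := by
  rintro x ⟨h1, h2, h3, h4, h5⟩
  set z : Fin 6 → EuclideanSpace ℝ (Fin 3) :=
    ![0, stdVec 0, stdVec 1, stdVec 2, stdVec 0 + stdVec 2, stdVec 1 + stdVec 2] with hz
  set w : Fin 6 → ℝ :=
    ![(1 - x 0 - x 1) * (1 - x 2), x 0 * (1 - x 2), x 1 * (1 - x 2),
      (1 - x 0 - x 1) * x 2, x 0 * x 2, x 1 * x 2] with hw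
  have w0 : w 0 = (1 - x 0 - x 1) * (1 - x 2) := rfl
  have w1 : w 1 = x 0 * (1 - x 2) := rfl
  have w2 : w 2 = x 1 * (1 - x 2) := rfl
  have w3 : w 3 = (1 - x 0 - x 1) * x 2 := rfl
  have w4 : w 4 = x 0 * x 2 := rfl
  have w5 : w 5 = x 1 * x 2 := rfl
  have z0 : z 0 = 0 := rfl
  have z1 : z 1 = stdVec 0 := rfl
  have z2 : z 2 = stdVec 1 := rfl
  have z3 : z 3 = stdVec 2 := rfl
  have z4 : z 4 = stdVec 0 + stdVec 2 := rfl
  have z5 : z 5 = stdVec 1 + stdVec 2 := rfl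
  have hsum : ∑ i : Fin 6, w i = 1 := by
    rw [Fin.sum_univ_six, w0, w1, w2, w3, w4, w5]; ring
  have hmem : (Finset.univ : Finset (Fin 6)).centerMass w z ∈ stdPrism := by
    apply Finset.centerMass_mem_convexHull
    · intro i _
      fin_cases i
      · show (0:ℝ) ≤ (1 - x 0 - x 1) * (1 - x 2); nlinarith
      · show (0:ℝ) ≤ x 0 * (1 - x 2); nlinarith
      · show (0:ℝ) ≤ x 1 * (1 - x 2); nlinarith
      · show (0:ℝ) ≤ (1 - x 0 - x 1) * x 2; nlinarith
      · show (0:ℝ) ≤ x 0 * x 2; nlinarith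
      · show (0:ℝ) ≤ x 1 * x 2; nlinarith
    · rw [hsum]; norm_num
    · intro i _
      fin_cases i
      · exact Set.mem_insert _ _
      · exact Set.mem_insert_of_mem _ (Set.mem_insert _ _)
      · exact Set.mem_insert_of_mem _ (Set.mem_insert_of_mem _ (Set.mem_insert _ _))
      · exact Set.mem_insert_of_mem _ (Set.mem_insert_of_mem _ (Set.mem_insert_of_mem _
          (Set.mem_insert _ _)))
      · exact Set.mem_insert_of_mem _ (Set.mem_insert_of_mem _ (Set.mem_insert_of_mem _
          (Set.mem_insert_of_mem _ (Set.mem_insert _ _))))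
      · exact Set.mem_insert_of_mem _ (Set.mem_insert_of_mem _ (Set.mem_insert_of_mem _
          (Set.mem_insert_of_mem _ (Set.mem_insert_of_mem _ rfl))))
  have hcm : (Finset.univ : Finset (Fin 6)).centerMass w z = x := by
    rw [Finset.centerMass_eq_of_sum_1 _ _ hsum, Fin.sum_univ_six,
      w0, w1, w2, w3, w4, w5, z0, z1, z2, z3, z4, z5]
    ext j
    fin_cases j <;>
      simp [stdVec, EuclideanSpace.single_apply, PiLp.add_apply, PiLp.smul_apply,
        smul_eq_mul] <;> ring
  rwa [hcm] at hmem

lemma max_sub_max_neg (a : ℝ) : max a 0 + -(max (-a) 0) = a := by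
  rcases le_total a 0 with h | h
  · rw [max_eq_right h, max_eq_left (by linarith)]; ring
  · rw [max_eq_left h, max_eq_right (by linarith)]; ring

lemma max_add_max_le {a b : ℝ} (ha : a ≤ 1) (hb : b ≤ 1) (hab : a + b ≤ 1) :
    max a 0 + max b 0 ≤ 1 := by
  rcases le_total a 0 with h | h <;> rcases le_total b 0 with h' | h'
  · rw [max_eq_right h, max_eq_right h']; norm_num
  · rw [max_eq_right h, max_eq_left h']; linarith
  · rw [max_eq_left h, max_eq_right h']; linarith
  · rw [max_eq_left h, max_eq_left h']; linarith

lemma diff_eq_Kset : stdPrism + -stdPrism = Kset := by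
  apply Set.Subset.antisymm
  · rintro z ⟨a, ha, b, hb, rfl⟩
    rw [Set.mem_neg] at hb
    obtain ⟨a1, a2, a3, a4, a5⟩ := prism_subset_Pset ha
    obtain ⟨b1, b2, b3, b4, b5⟩ := prism_subset_Pset hb
    have e : ∀ i, (a + b) i = a i + b i := fun i => rfl
    have e' : ∀ i, (-b : EuclideanSpace ℝ (Fin 3)) i = -(b i) := fun i => rfl
    simp only [e'] at b1 b2 b3 b4 b5
    refine ⟨?_, ?_, ?_, ?_, ?_, ?_, ?_, ?_⟩ <;> simp only [e] <;> linarith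
  · rintro x ⟨h1, h2, h3, h4, h5, h6, h7, h8⟩
    set p : EuclideanSpace ℝ (Fin 3) :=
      (EuclideanSpace.equiv (Fin 3) ℝ).symm ![max (x 0) 0, max (x 1) 0, max (x 2) 0] with hp
    set q : EuclideanSpace ℝ (Fin 3) :=
      (EuclideanSpace.equiv (Fin 3) ℝ).symm
        ![max (-(x 0)) 0, max (-(x 1)) 0, max (-(x 2)) 0] with hq
    have hpP : p ∈ Pset :=
      ⟨le_max_right _ _, le_max_right _ _, max_add_max_le h2 h4 h6,
        le_max_right _ _, max_le h8 zero_le_one⟩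
    have hqP : q ∈ Pset :=
      ⟨le_max_right _ _, le_max_right _ _,
        max_add_max_le (by linarith) (by linarith) (by linarith),
        le_max_right _ _, max_le (by linarith) zero_le_one⟩
    have hmem := Set.add_mem_add (Pset_subset_prism hpP)
      (Set.neg_mem_neg.2 (Pset_subset_prism hqP))
    have hx : p + -q = x := by
      ext j
      fin_cases j
      · exact max_sub_max_neg (x 0)
      · exact max_sub_max_neg (x 1)
      · exact max_sub_max_neg (x 2)
    rwa [hx] at hmem

lemma measurable_Hset : MeasurableSet Hset := by
  unfold Hset
  apply MeasurableSet.inter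
  · exact measurableSet_le measurable_const measurable_fst
  apply MeasurableSet.inter
  · exact measurableSet_le measurable_fst measurable_const
  apply MeasurableSet.inter
  · exact measurableSet_le measurable_const measurable_snd
  apply MeasurableSet.inter
  · exact measurableSet_le measurable_snd measurable_const
  apply MeasurableSet.inter
  · exact measurableSet_le measurable_const (measurable_fst.add measurable_snd)
  · exact measurableSet_le (measurable_fst.add measurable_snd) measurable_const

lemma slice_Hset (a : ℝ) :
    volume (Prod.mk a ⁻¹' Hset) =
      Set.indicator (Set.Icc (-1:ℝ) 1) (fun x => ENNReal.ofReal (2 - |x|)) a := by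
  by_cases ha : a ∈ Set.Icc (-1:ℝ) 1
  · obtain ⟨ha1, ha2⟩ := ha
    have hs : Prod.mk a ⁻¹' Hset = Set.Icc (max (-1) (-1 - a)) (min 1 (1 - a)) := by
      ext b
      simp only [Set.mem_preimage, Hset, Set.mem_setOf_eq, Set.mem_Icc, max_le_iff, le_min_iff,
        le_max_iff, min_le_iff]
      constructor
      · rintro ⟨_, _, h3, h4, h5, h6⟩
        exact ⟨⟨h3, by linarith⟩, h4, by linarith⟩
      · rintro ⟨⟨h3, h5⟩, h4, h6⟩
        exact ⟨ha1, ha2, h3, h4, by linarith, by linarith⟩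
    rw [hs, Real.volume_Icc, Set.indicator_of_mem (Set.mem_Icc.mpr ⟨ha1, ha2⟩)]
    congr 1
    rcases le_total a 0 with h | h
    · rw [min_eq_left (by linarith), max_eq_right (by linarith), abs_of_nonpos h]; ring
    · rw [min_eq_right (by linarith), max_eq_left (by linarith), abs_of_nonneg h]; ring
  · have hs : Prod.mk a ⁻¹' Hset = ∅ := by
      ext b
      simp only [Set.mem_preimage, Hset, Set.mem_setOf_eq, Set.mem_empty_iff_false, iff_false]
      rintro ⟨h1, h2, -⟩
      exact ha ⟨h1, h2⟩
    rw [hs, Set.indicator_of_notMem ha]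
    simp

lemma integral_hex : ∫ x in Set.Icc (-1:ℝ) 1, (2 - |x|) = 3 := by
  rw [MeasureTheory.integral_Icc_eq_integral_Ioc,
    ← intervalIntegral.integral_of_le (by norm_num : (-1:ℝ) ≤ 1)]
  have hi : ∀ u v : ℝ, IntervalIntegrable (fun x => 2 - |x|) volume u v :=
    fun u v => (continuous_const.sub continuous_abs).intervalIntegrable u v
  rw [← intervalIntegral.integral_add_adjacent_intervals (hi (-1) 0) (hi 0 1)]
  have h1 : ∫ x in (-1:ℝ)..0, (2 - |x|) = ∫ x in (-1:ℝ)..0, (2 + x) := by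
    apply intervalIntegral.integral_congr
    intro x hx
    rw [Set.uIcc_of_le (by norm_num : (-1:ℝ) ≤ 0)] at hx
    simp only []
    rw [abs_of_nonpos hx.2]; ring
  have h2 : ∫ x in (0:ℝ)..1, (2 - |x|) = ∫ x in (0:ℝ)..1, (2 - x) := by
    apply intervalIntegral.integral_congr
    intro x hx
    rw [Set.uIcc_of_le (by norm_num : (0:ℝ) ≤ 1)] at hx
    simp only []
    rw [abs_of_nonneg hx.1]
  rw [h1, h2]
  have e1 : ∫ x in (-1:ℝ)..0, (2 + x) = 3/2 := by
    rw [intervalIntegral.integral_add intervalIntegrable_const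
      intervalIntegral.intervalIntegrable_id, intervalIntegral.integral_const, integral_id]
    norm_num
  have e2 : ∫ x in (0:ℝ)..1, (2 - x) = 3/2 := by
    rw [intervalIntegral.integral_sub intervalIntegrable_const
      intervalIntegral.intervalIntegrable_id, intervalIntegral.integral_const, integral_id]
    norm_num
  rw [e1, e2]; norm_num

lemma volume_Hset : volume Hset = 3 := by
  rw [Measure.volume_eq_prod, Measure.prod_apply measurable_Hset]
  calc
    ∫⁻ a, volume (Prod.mk a ⁻¹' Hset) =
        ∫⁻ a, Set.indicator (Set.Icc (-1:ℝ) 1) (fun x => ENNReal.ofReal (2 - |x|)) a := by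
      simp_rw [slice_Hset]
    _ = ∫⁻ a in Set.Icc (-1:ℝ) 1, ENNReal.ofReal (2 - |a|) := by
      rw [lintegral_indicator measurableSet_Icc]
    _ = ENNReal.ofReal (∫ a in Set.Icc (-1:ℝ) 1, (2 - |a|)) := by
      rw [← MeasureTheory.ofReal_integral_eq_lintegral_ofReal]
      · exact (continuous_const.sub continuous_abs).integrableOn_Icc
      · filter_upwards [self_mem_ae_restrict measurableSet_Icc] with x hx
        have := abs_le.mpr ⟨hx.1, hx.2⟩
        simp only [Pi.zero_apply]
        linarith [this]
    _ = 3 := by rw [integral_hex]; norm_num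

lemma volume_Sset : volume Sset = 6 := by
  rw [Sset, Measure.volume_eq_prod, Measure.prod_prod, Real.volume_Icc, volume_Hset]
  rw [show (1:ℝ) - -1 = 2 by norm_num]
  rw [show ENNReal.ofReal 2 = 2 by norm_num]
  norm_num

lemma volume_Kset : volume Kset = 6 := by
  let f : EuclideanSpace ℝ (Fin 3) → ℝ × (ℝ × ℝ) := fun x =>
    (Prod.map id MeasurableEquiv.finTwoArrow)
      (MeasurableEquiv.piFinSuccAbove (fun _ : Fin 3 => ℝ) 2
        ((MeasurableEquiv.toLp 2 (Fin 3 → ℝ)).symm x))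
  have hmp : MeasurePreserving f volume volume :=
    (((MeasurePreserving.id volume).prod (volume_preserving_finTwoArrow ℝ)).comp
      (volume_preserving_piFinSuccAbove (fun _ : Fin 3 => ℝ) 2)).comp
      (EuclideanSpace.volume_preserving_symm_measurableEquiv_toLp (Fin 3))
  have hpre : f ⁻¹' Sset = Kset := by
    ext x
    simp [f, Sset, Hset, Kset, MeasurableEquiv.piFinSuccAbove, Set.mem_Icc,
      Fin.succAbove, MeasurableEquiv.coe_toLp_symm]
    tauto
  have hms : NullMeasurableSet Sset (volume : Measure (ℝ × (ℝ × ℝ))) :=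
    (measurableSet_Icc.prod measurable_Hset).nullMeasurableSet
  rw [← hpre, hmp.measure_preimage hms, volume_Sset]

/-- The volume of the difference body of the triangular prism equals `6`. -/
theorem stmt_11 : volume (stdPrism + -stdPrism) = 6 := by
  rw [diff_eq_Kset, volume_Kset]
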